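/- Let c > 0 and let s : ℝ → ℝ be differentiable with s(t)·s'(t) ≤ −c·|s(t)| for all t ≥ 0. Then |s(t)| ≤ max(|s(0)| − c·t, 0) for all t ≥ 0; in particular s(t) = 0 for all t ≥ |s(0)|/c. -/

import Mathlib

/-- Sliding-mode reaching argument of Theorem 2: if s·ṡ ≤ −c·|s| on [0, ∞)
with c > 0, then |s(t)| ≤ max(|s(0)| − c·t, 0) and s vanishes for all
t ≥ |s(0)|/c. -/
theorem stmt_14 (c : ℝ) (hc : 0 < c) (s : ℝ → ℝ) (hs : Differentiable ℝ s)
    (hderiv : ∀ t, 0 ≤ t → s t * deriv s t ≤ -c * |s t|) :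
    (∀ t, 0 ≤ t → |s t| ≤ max (|s 0| - c * t) 0) ∧
    (∀ t, |s 0| / c ≤ t → s t = 0) := by
  -- s^2 is antitone on [0, ∞)
  have hsq : AntitoneOn (fun u => s u ^ 2) (Set.Ici 0) := by
    apply antitoneOn_of_deriv_nonpos (convex_Ici 0)
    · exact ((hs.continuous).pow 2).continuousOn
    · intro u hu
      exact ((hs u).pow 2).differentiableWithinAt
    · intro u hu
      rw [interior_Ici] at hu
      have hD : deriv (fun u => s u ^ 2) u = 2 * s u * deriv s u := by
        have := (hs u).hasDerivAt
        have h2 : HasDerivAt (fun u => s u ^ 2) (2 * s u ^ 1 * deriv s u) u := by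
          simpa using this.fun_pow 2
        simpa [pow_one] using h2.deriv
      rw [hD]
      have h1 := hderiv u (le_of_lt hu)
      have h2 : (0 : ℝ) ≤ c * |s u| := mul_nonneg hc.le (abs_nonneg _)
      nlinarith
  -- persistence: once s hits zero it stays zero
  have hpers : ∀ u t : ℝ, 0 ≤ u → u ≤ t → s u = 0 → s t = 0 := by
    intro u t hu hut hsu
    have h1 : s t ^ 2 ≤ s u ^ 2 := hsq hu (le_trans hu hut) hut
    have h2 : s t ^ 2 ≤ 0 := by rw [hsu] at h1; simpa using h1
    have : s t ^ 2 = 0 := le_antisymm h2 (sq_nonneg _)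
    exact pow_eq_zero_iff (by norm_num) |>.mp this
  have key : ∀ t, 0 ≤ t → |s t| ≤ max (|s 0| - c * t) 0 := by
    intro t ht
    by_cases hz : ∃ u ∈ Set.Icc (0 : ℝ) t, s u = 0
    · obtain ⟨u, hu, hsu⟩ := hz
      have : s t = 0 := hpers u t hu.1 hu.2 hsu
      rw [this, abs_zero]
      exact le_max_right _ _
    · push_neg at hz
      have h0 : s 0 ≠ 0 := hz 0 ⟨le_refl _, ht⟩
      rcases h0.lt_or_gt with hneg | hpos
      · -- s < 0 on [0, t]
        have hall : ∀ u ∈ Set.Icc (0 : ℝ) t, s u < 0 := by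
          intro u hu
          by_contra h
          push_neg at h
          have hpos' : 0 < s u := lt_of_le_of_ne h (Ne.symm (hz u hu))
          have := intermediate_value_Icc hu.1 hs.continuous.continuousOn
          have h0mem : (0 : ℝ) ∈ Set.Icc (s 0) (s u) := ⟨hneg.le, hpos'.le⟩
          obtain ⟨x, hx, hsx⟩ := this h0mem
          exact hz x ⟨hx.1, le_trans hx.2 hu.2⟩ hsx
        have hg : AntitoneOn (fun u => -s u + c * u) (Set.Icc 0 t) := by
          apply antitoneOn_of_deriv_nonpos (convex_Icc 0 t)
          · exact ((hs.continuous.neg).add (continuous_const.mul continuous_id)).continuousOn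
          · intro u hu
            exact (((hs u).neg).add ((differentiable_const c).mul differentiable_id u)).differentiableWithinAt
          · intro u hu
            rw [interior_Icc] at hu
            have hD : deriv (fun u => -s u + c * u) u = -deriv s u + c := by
              have h1 : HasDerivAt (fun u => -s u + c * u) (-deriv s u + c * 1) u :=
                ((hs u).hasDerivAt.neg).add ((hasDerivAt_id u).const_mul c)
              simpa using h1.deriv
            rw [hD]
            have h1 := hderiv u hu.1.le
            have hsu : s u < 0 := hall u ⟨hu.1.le, hu.2.le⟩
            rw [abs_of_neg hsu] at h1
            nlinarith
        have hgt := hg (Set.left_mem_Icc.mpr ht) ⟨ht, le_refl t⟩ ht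
        simp only at hgt
        have hst : s t < 0 := hall t ⟨ht, le_refl t⟩
        rw [abs_of_neg hst, abs_of_neg hneg]
        have : -s t + c * t ≤ -s 0 + c * 0 := hgt
        refine le_max_of_le_left ?_
        linarith
      · -- s > 0 on [0, t]
        have hall : ∀ u ∈ Set.Icc (0 : ℝ) t, 0 < s u := by
          intro u hu
          by_contra h
          push_neg at h
          have hneg' : s u < 0 := lt_of_le_of_ne h (hz u hu)
          have := intermediate_value_Icc' hu.1 hs.continuous.continuousOn
          have h0mem : (0 : ℝ) ∈ Set.Icc (s u) (s 0) := ⟨hneg'.le, hpos.le⟩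
          obtain ⟨x, hx, hsx⟩ := this h0mem
          exact hz x ⟨hx.1, le_trans hx.2 hu.2⟩ hsx
        have hg : AntitoneOn (fun u => s u + c * u) (Set.Icc 0 t) := by
          apply antitoneOn_of_deriv_nonpos (convex_Icc 0 t)
          · exact ((hs.continuous).add (continuous_const.mul continuous_id)).continuousOn
          · intro u hu
            exact ((hs u).add ((differentiable_const c).mul differentiable_id u)).differentiableWithinAt
          · intro u hu
            rw [interior_Icc] at hu
            have hD : deriv (fun u => s u + c * u) u = deriv s u + c := by
              have h1 : HasDerivAt (fun u => s u + c * u) (deriv s u + c * 1) u :=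
                (hs u).hasDerivAt.add ((hasDerivAt_id u).const_mul c)
              simpa using h1.deriv
            rw [hD]
            have h1 := hderiv u hu.1.le
            have hsu : 0 < s u := hall u ⟨hu.1.le, hu.2.le⟩
            rw [abs_of_pos hsu] at h1
            nlinarith
        have hgt := hg (Set.left_mem_Icc.mpr ht) ⟨ht, le_refl t⟩ ht
        simp only at hgt
        have hst : 0 < s t := hall t ⟨ht, le_refl t⟩
        rw [abs_of_pos hst, abs_of_pos hpos]
        have : s t + c * t ≤ s 0 + c * 0 := hgt
        refine le_max_of_le_left ?_
        linarith
  refine ⟨key, fun t ht => ?_⟩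
  have ht0 : (0 : ℝ) ≤ t := le_trans (div_nonneg (abs_nonneg _) hc.le) ht
  have h1 : |s 0| ≤ c * t := by
    rw [div_le_iff₀ hc] at ht
    linarith [ht]
  have h2 := key t ht0
  have h3 : max (|s 0| - c * t) 0 = 0 := max_eq_right (by linarith)
  rw [h3] at h2
  exact abs_eq_zero.mp (le_antisymm h2 (abs_nonneg _))
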